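/- Let n ≥ 2, 1 ≤ m < n, and let ψ ∈ ℂ^{2^n} be a unit vector satisfying the parity superselection rule. Then the mode-reduced density matrices Λ₁ (of size 2^m) and Λ₂ (of size 2^{n−m}) of ψ have the same nonzero spectrum with multiplicities: X^{2^m} · charpoly(Λ₂)(X) = X^{2^{n−m}} · charpoly(Λ₁)(X) as polynomials. -/

import Mathlib

open Matrix Polynomial

/-- Binary strings of length `n`, indexing the `2^n`-dimensional Fock space. -/
abbrev Idx (n : ℕ) := Fin n → Fin 2

/-- Jordan–Wigner creation matrix `aₜ†` for mode `t`:
`aₜ†|j₁…jₙ⟩ = (−1)^{j₁+⋯+j_{t−1}} |j₁…j_{t−1} 1 j_{t+1}…jₙ⟩` if `jₜ = 0`, and `0` if `jₜ = 1`. -/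
noncomputable def adag (n : ℕ) (t : Fin n) : Matrix (Idx n) (Idx n) ℂ :=
  Matrix.of fun J K =>
    if K t = 0 ∧ J = Function.update K t 1
    then (-1 : ℂ) ^ (∑ s ∈ Finset.univ.filter (fun s => s < t), (K s : ℕ))
    else 0

/-- Jordan–Wigner annihilation matrix `aₜ`, the conjugate transpose of `aₜ†`. -/
noncomputable def ann (n : ℕ) (t : Fin n) : Matrix (Idx n) (Idx n) ℂ := (adag n t)ᴴ

/-- A vector `ψ` satisfies the parity superselection rule if the particle numbers
`j₁+⋯+jₙ` have the same parity for all `J` with `⟨J|ψ⟩ ≠ 0`. -/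
def PSSR {n : ℕ} (ψ : Idx n → ℂ) : Prop :=
  (∀ J, ψ J ≠ 0 → Even (∑ s, (J s : ℕ))) ∨ (∀ J, ψ J ≠ 0 → Odd (∑ s, (J s : ℕ)))

/-- `c_{jₛ}† = aₛaₛ†` if `jₛ = 0` and `aₛ†` if `jₛ = 1`. -/
noncomputable def cdag (n : ℕ) (s : Fin n) (j : Fin 2) : Matrix (Idx n) (Idx n) ℂ :=
  if j = 0 then ann n s * adag n s else adag n s

/-- `c_{kₛ} = aₛaₛ†` if `kₛ = 0` and `aₛ` if `kₛ = 1`. -/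
noncomputable def cann (n : ℕ) (s : Fin n) (k : Fin 2) : Matrix (Idx n) (Idx n) ℂ :=
  if k = 0 then ann n s * adag n s else ann n s

/-- `A_{JK} = c_{j₁}† c_{j₂}† ⋯ c_{jₙ}† c_{kₙ} ⋯ c_{k₂} c_{k₁}`. -/
noncomputable def AJK (n : ℕ) (J K : Idx n) : Matrix (Idx n) (Idx n) ℂ :=
  (((List.finRange n).map fun s => cdag n s (J s)).prod) *
  ((((List.finRange n).reverse).map fun s => cann n s (K s)).prod)

/-- `A^{(i)}_{KJ} = c_{k₁}† ⋯ c_{k_m}† c_{j_m} ⋯ c_{j₁}` built from the ladder matrices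
of the modes selected by `f`. -/
noncomputable def Asub (n m : ℕ) (f : Fin m → Fin n) (K J : Idx m) :
    Matrix (Idx n) (Idx n) ℂ :=
  (((List.finRange m).map fun s => cdag n (f s) (K s)).prod) *
  ((((List.finRange m).reverse).map fun s => cann n (f s) (J s)).prod)

/-- The mode-reduced density matrix of `ψ` on the modes selected by `f`:
entries `Λ(J,K) = ⟨ψ, A_{KJ} ψ⟩`. -/
noncomputable def modeRDM (n m : ℕ) (f : Fin m → Fin n) (ψ : Idx n → ℂ) :
    Matrix (Idx m) (Idx m) ℂ :=
  Matrix.of fun J K => star ψ ⬝ᵥ (Asub n m f K J *ᵥ ψ)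

/-- The inclusion of the last `n − m` modes: `s ↦ m + s`. -/
def emb2 (n m : ℕ) (h : m ≤ n) : Fin (n - m) → Fin n :=
  fun s => ⟨m + (s : ℕ), by have := s.isLt; omega⟩



section CharpolyAux
variable {p q : Type*} [Fintype p] [Fintype q] [DecidableEq p] [DecidableEq q]
variable {R : Type*} [CommRing R]

lemma my_charpoly_transpose (A : Matrix p p R) : Aᵀ.charpoly = A.charpoly := by
  unfold Matrix.charpoly
  rw [← Matrix.det_transpose (charmatrix A)]
  congr 1
  apply Matrix.ext
  intro i j
  by_cases h : i = j
  · subst h; simp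
  · simp [Matrix.charmatrix_apply, Matrix.transpose_apply, Matrix.diagonal, h, Ne.symm h]

lemma my_det_scalar : (Matrix.scalar p (X : R[X])).det = X ^ (Fintype.card p) := by
  rw [Matrix.scalar_apply, Matrix.det_diagonal, Finset.prod_const, Finset.card_univ]

lemma X_pow_charpoly_mul_comm (A : Matrix p q R) (B : Matrix q p R) :
    X ^ (Fintype.card q) * (A * B).charpoly = X ^ (Fintype.card p) * (B * A).charpoly := by
  classical
  set P : Matrix (p ⊕ q) (p ⊕ q) R[X] :=
    Matrix.fromBlocks (Matrix.scalar p (X : R[X])) (A.map C) (B.map C) 1 with hP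
  set Q : Matrix (p ⊕ q) (p ⊕ q) R[X] :=
    Matrix.fromBlocks 1 0 (-(B.map C)) (Matrix.scalar q (X : R[X])) with hQ
  have hPQ : P * Q = Matrix.fromBlocks (charmatrix (A * B))
      (A.map C * Matrix.scalar q (X : R[X])) 0 (Matrix.scalar q (X : R[X])) := by
    rw [hP, hQ, Matrix.fromBlocks_multiply]
    simp only [Matrix.mul_zero, Matrix.mul_one, Matrix.one_mul, Matrix.zero_mul, add_zero,
      zero_add, Matrix.mul_neg, add_neg_cancel, ← Matrix.map_mul, charmatrix,
      RingHom.mapMatrix_apply, sub_eq_add_neg]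
  have hQP : Q * P = Matrix.fromBlocks (Matrix.scalar p (X : R[X]))
      (A.map C) 0 (charmatrix (B * A)) := by
    have f21 : Matrix.scalar q (X : R[X]) * B.map C - B.map C * Matrix.scalar p (X : R[X])
        = (0 : Matrix q p R[X]) := by
      apply Matrix.ext
      intro i j
      simp only [Matrix.sub_apply, Matrix.scalar_apply, Matrix.mul_diagonal,
        Matrix.diagonal_mul, Matrix.zero_apply]
      ring
    rw [hP, hQ, Matrix.fromBlocks_multiply]
    simp only [Matrix.mul_zero, Matrix.mul_one, Matrix.one_mul, Matrix.zero_mul, add_zero,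
      zero_add, Matrix.neg_mul, ← Matrix.map_mul, charmatrix, RingHom.mapMatrix_apply,
      neg_add_eq_sub, f21]
  have h1 : (P * Q).det = (A * B).charpoly * X ^ (Fintype.card q) := by
    rw [hPQ, Matrix.det_fromBlocks_zero₂₁, my_det_scalar]
    rfl
  have h2 : (Q * P).det = X ^ (Fintype.card p) * (B * A).charpoly := by
    rw [hQP, Matrix.det_fromBlocks_zero₂₁, my_det_scalar]
    rfl
  calc X ^ (Fintype.card q) * (A * B).charpoly
      = (P * Q).det := by rw [h1, mul_comm]
    _ = (Q * P).det := by rw [Matrix.det_mul, Matrix.det_mul, mul_comm]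
    _ = X ^ (Fintype.card p) * (B * A).charpoly := h2

end CharpolyAux



namespace JW

variable {n : ℕ}

/-- number of occupied modes strictly below `s` -/
def sgn {n : ℕ} (w : Idx n) (s : Fin n) : ℕ :=
  ∑ t ∈ Finset.univ.filter (fun t => t < s), (w t : ℕ)

def setOn {n : ℕ} (l : List (Fin n)) (g w : Idx n) : Idx n :=
  fun t => if t ∈ l then g t else w t

def edSum {n : ℕ} (l : List (Fin n)) (g w : Idx n) : ℕ :=
  (l.map (fun s => (g s : ℕ) * sgn w s)).sum

lemma setOn_nil (g w : Idx n) : setOn [] g w = w := by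
  funext t; simp [setOn]

lemma adag_apply (s : Fin n) (v w : Idx n) :
    adag n s v w = if w s = 0 ∧ v = Function.update w s 1 then (-1:ℂ)^(sgn w s) else 0 := rfl

lemma cdag_apply (s : Fin n) (k : Fin 2) (v w : Idx n) :
    cdag n s k v w =
      if w s = 0 ∧ v = Function.update w s k then (-1:ℂ)^((k:ℕ) * sgn w s) else 0 := by
  by_cases hk : k = 0
  · subst hk
    rw [cdag, if_pos rfl, Matrix.mul_apply]
    by_cases hw : w s = 0
    · have hsum : ∀ u : Idx n, ann n s v u * adag n s u w =
          (if u = Function.update w s 1 then ann n s v u * (-1:ℂ)^(sgn w s) else 0) := by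
        intro u
        by_cases hu : u = Function.update w s 1
        · subst hu; rw [if_pos rfl, adag_apply, if_pos ⟨hw, rfl⟩]
        · rw [if_neg hu, adag_apply, if_neg, mul_zero]
          rintro ⟨-, h2⟩; exact hu h2
      rw [Finset.sum_congr rfl (fun u _ => hsum u), Finset.sum_ite_eq' Finset.univ]
      rw [if_pos (Finset.mem_univ _)]
      rw [ann, Matrix.conjTranspose_apply, adag_apply]
      by_cases hv : v = w
      · subst hv
        rw [if_pos ⟨hw, rfl⟩]
        have hupdate : Function.update v s (0 : Fin 2) = v := by
          funext t; by_cases ht : t = s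
          · subst ht; rw [Function.update_self, hw]
          · rw [Function.update_of_ne ht]
        rw [if_pos ⟨hw, hupdate.symm⟩]
        simp [← pow_add, ← two_mul, pow_mul]
      · have h1 : ¬(v s = 0 ∧ Function.update w s 1 = Function.update v s 1) := by
          rintro ⟨hv0, hup⟩
          apply hv
          funext t
          by_cases ht : t = s
          · subst ht; rw [hv0, hw]
          · have := congrFun hup t
            rw [Function.update_of_ne ht, Function.update_of_ne ht] at this
            exact this.symm
        rw [if_neg h1, star_zero, zero_mul, if_neg]
        rintro ⟨-, hv2⟩
        apply hv
        have hupdate : Function.update w s (0 : Fin 2) = w := by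
          funext t; by_cases ht : t = s
          · subst ht; rw [Function.update_self, hw]
          · rw [Function.update_of_ne ht]
        rw [hv2, hupdate]
    · rw [if_neg (by rintro ⟨h1, -⟩; exact hw h1)]
      apply Finset.sum_eq_zero
      intro u _
      rw [adag_apply, if_neg (by rintro ⟨h1, -⟩; exact hw h1), mul_zero]
  · have hk1 : k = 1 := by omega
    subst hk1
    rw [cdag, if_neg (by decide), adag_apply]
    norm_num

lemma mul_apply_single_col {α : Type*} [Fintype α] [DecidableEq α]
    (M N : Matrix α α ℂ) (v w u0 : α) (c : ℂ) (P : Prop) [Decidable P]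
    (hN : ∀ u, N u w = if P ∧ u = u0 then c else 0) :
    (M * N) v w = if P then M v u0 * c else 0 := by
  rw [Matrix.mul_apply]
  by_cases hP : P
  · simp only [hN, hP, true_and, mul_ite, mul_zero, Finset.sum_ite_eq' Finset.univ,
      Finset.mem_univ, if_true]
  · simp only [hN, hP, false_and, if_false, mul_zero, Finset.sum_const_zero]

/-- product of the creation-side `c†` matrices along an increasing list of modes -/
noncomputable def Cd (n : ℕ) (l : List (Fin n)) (g : Idx n) : Matrix (Idx n) (Idx n) ℂ :=
  (l.map fun s => cdag n s (g s)).prod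

lemma setOn_cons (s : Fin n) (l : List (Fin n)) (g w : Idx n) (hs : s ∉ l) :
    setOn (s :: l) g w = Function.update (setOn l g w) s (g s) := by
  funext t
  by_cases ht : t = s
  · subst ht; rw [Function.update_self, setOn, if_pos (List.mem_cons_self)]
  · rw [Function.update_of_ne ht, setOn, setOn]
    simp [List.mem_cons, ht]

lemma sgn_setOn (s : Fin n) (l : List (Fin n)) (g w : Idx n) (hs : ∀ t ∈ l, s < t) :
    sgn (setOn l g w) s = sgn w s := by
  apply Finset.sum_congr rfl
  intro t ht
  rw [Finset.mem_filter] at ht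
  have htl : t ∉ l := fun h => absurd (hs t h) (not_lt_of_gt ht.2)
  rw [setOn, if_neg htl]

lemma cdag_chain (g : Idx n) :
    ∀ l : List (Fin n), l.Pairwise (· < ·) →
    Cd n l g = Matrix.of (fun v w =>
      if (∀ s ∈ l, w s = 0) ∧ v = setOn l g w then (-1:ℂ)^(edSum l g w) else 0) := by
  intro l
  induction l with
  | nil =>
    intro _
    apply Matrix.ext
    intro v w
    simp [Cd, setOn_nil, edSum, Matrix.one_apply, eq_comm]
  | cons s l ih =>
    intro hp
    obtain ⟨hs, hl⟩ := List.pairwise_cons.mp hp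
    have hsl : s ∉ l := fun h => absurd (hs s h) (lt_irrefl s)
    rw [Cd, List.map_cons, List.prod_cons, ← Cd, ih hl]
    apply Matrix.ext
    intro v w
    rw [mul_apply_single_col (cdag n s (g s)) _ v w (setOn l g w) ((-1:ℂ)^(edSum l g w))
      (∀ s' ∈ l, w s' = 0) (fun u => rfl)]
    rw [cdag_apply, sgn_setOn s l g w hs, ← setOn_cons s l g w hsl]
    have hws : setOn l g w s = w s := by rw [setOn, if_neg hsl]
    have hed : edSum (s :: l) g w = (g s : ℕ) * sgn w s + edSum l g w := rfl
    rw [Matrix.of_apply, hed, pow_add, hws]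
    by_cases hP : ∀ x ∈ l, w x = 0 <;> by_cases h2 : w s = 0 <;>
      by_cases hv : v = setOn (s :: l) g w <;>
      simp [hP, h2, hv, List.forall_mem_cons, mul_comm]

lemma cann_eq_conjTranspose (s : Fin n) (k : Fin 2) : cann n s k = (cdag n s k)ᴴ := by
  by_cases hk : k = 0 <;>
    simp [cann, cdag, hk, ann, Matrix.conjTranspose_mul, Matrix.conjTranspose_conjTranspose]

lemma Asub_eq (m' : ℕ) (f : Fin m' → Fin n) (K J : Idx m') (gK gJ : Idx n)
    (hK : ∀ s, gK (f s) = K s) (hJ : ∀ s, gJ (f s) = J s) :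
    Asub n m' f K J = Cd n ((List.finRange m').map f) gK * (Cd n ((List.finRange m').map f) gJ)ᴴ := by
  have h1 : ((List.finRange m').map fun s => cdag n (f s) (K s))
      = ((List.finRange m').map f).map (fun u => cdag n u (gK u)) := by
    rw [List.map_map]
    apply List.map_congr_left
    intro s _
    show cdag n (f s) (K s) = cdag n (f s) (gK (f s))
    rw [hK s]
  have h2 : (Cd n ((List.finRange m').map f) gJ)ᴴ
      = (((List.finRange m').reverse).map fun s => cann n (f s) (J s)).prod := by
    rw [Cd, Matrix.conjTranspose_list_prod, List.map_map, ← List.map_reverse,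
      ← List.map_reverse, List.map_map]
    congr 1
    apply List.map_congr_left
    intro s _
    show (cdag n (f s) (gJ (f s)))ᴴ = cann n (f s) (J s)
    rw [hJ s, cann_eq_conjTranspose]
  rw [Asub, Cd, h1, h2]

lemma phi_apply (l : List (Fin n)) (hp : l.Pairwise (· < ·)) (g : Idx n) (ψ : Idx n → ℂ)
    (u : Idx n) :
    ((Cd n l g)ᴴ *ᵥ ψ) u =
      if (∀ s ∈ l, u s = 0) then (-1:ℂ)^(edSum l g u) * ψ (setOn l g u) else 0 := by
  rw [cdag_chain g l hp]
  simp only [Matrix.mulVec, dotProduct, Matrix.conjTranspose_apply, Matrix.of_apply]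
  by_cases hc : ∀ s ∈ l, u s = 0
  · simp only [eq_true hc, true_and, if_true]
    have hterm : ∀ w : Idx n,
        star (if w = setOn l g u then (-1:ℂ)^(edSum l g u) else 0) * ψ w
          = if w = setOn l g u then (-1:ℂ)^(edSum l g u) * ψ w else 0 := by
      intro w
      by_cases hw : w = setOn l g u
      · rw [if_pos hw, if_pos hw]
        congr 1
        rw [star_pow]
        norm_num
      · rw [if_neg hw, if_neg hw, star_zero, zero_mul]
    rw [Finset.sum_congr rfl (fun w _ => hterm w), Finset.sum_ite_eq' Finset.univ,
      if_pos (Finset.mem_univ _)]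
  · simp only [eq_false hc, false_and, if_false, star_zero, zero_mul, Finset.sum_const_zero]

lemma rdm_entry (m' : ℕ) (f : Fin m' → Fin n) (ψ : Idx n → ℂ) (J K : Idx m')
    (gK gJ : Idx n) (hK : ∀ s, gK (f s) = K s) (hJ : ∀ s, gJ (f s) = J s)
    (hp : ((List.finRange m').map f).Pairwise (· < ·)) :
    modeRDM n m' f ψ J K =
      ∑ u : Idx n, if (∀ s ∈ (List.finRange m').map f, u s = 0)
        then (-1:ℂ)^(edSum ((List.finRange m').map f) gK u + edSum ((List.finRange m').map f) gJ u)
          * (star (ψ (setOn ((List.finRange m').map f) gK u))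
             * ψ (setOn ((List.finRange m').map f) gJ u)) else 0 := by
  set l := (List.finRange m').map f with hl
  show star ψ ⬝ᵥ (Asub n m' f K J *ᵥ ψ) = _
  rw [Asub_eq m' f K J gK gJ hK hJ, ← Matrix.mulVec_mulVec, Matrix.dotProduct_mulVec]
  have hstar : star ψ ᵥ* (Cd n l gK) = star ((Cd n l gK)ᴴ *ᵥ ψ) := by
    rw [Matrix.star_mulVec, Matrix.conjTranspose_conjTranspose]
  rw [hstar, dotProduct]
  apply Finset.sum_congr rfl
  intro u _
  rw [Pi.star_apply, phi_apply l hp gK ψ u, phi_apply l hp gJ ψ u]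
  by_cases hc : ∀ s ∈ l, u s = 0
  · rw [if_pos hc, if_pos hc, if_pos hc]
    rw [star_mul', star_pow, pow_add]
    norm_num
    ring
  · rw [if_neg hc, if_neg hc, if_neg hc, star_zero, zero_mul]

variable {m : ℕ}

def glue (n m : ℕ) (a : Idx m) (b : Idx (n - m)) : Idx n :=
  fun t => if h : (t : ℕ) < m then a ⟨t, h⟩
    else b ⟨(t : ℕ) - m, by have := t.isLt; omega⟩

lemma glue_of_lt (a : Idx m) (b : Idx (n - m)) (t : Fin n) (ht : (t : ℕ) < m) :
    glue n m a b t = a ⟨t, ht⟩ := by simp [glue, ht]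

lemma glue_of_ge (a : Idx m) (b : Idx (n - m)) (t : Fin n) (ht : ¬ (t : ℕ) < m) :
    glue n m a b t = b ⟨(t : ℕ) - m, by have := t.isLt; omega⟩ := by simp [glue, ht]

lemma glue_castLE (h : m ≤ n) (a : Idx m) (b : Idx (n - m)) (x : Fin m) :
    glue n m a b (Fin.castLE h x) = a x := by
  rw [glue_of_lt a b _ (by simpa using x.isLt)]
  exact congrArg a (Fin.ext rfl)

lemma glue_emb2 (h : m ≤ n) (a : Idx m) (b : Idx (n - m)) (x : Fin (n - m)) :
    glue n m a b (emb2 n m h x) = b x := by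
  rw [glue_of_ge a b _ (by simp [emb2])]
  congr 1
  apply Fin.ext
  simp [emb2]

lemma glue_split (h : m ≤ n) (w : Idx n) :
    glue n m (fun x => w (Fin.castLE h x)) (fun x => w (emb2 n m h x)) = w := by
  funext t
  by_cases ht : (t : ℕ) < m
  · rw [glue_of_lt _ _ _ ht]
    exact congrArg w (Fin.ext rfl)
  · rw [glue_of_ge _ _ _ ht]
    congr 1
    apply Fin.ext
    simp [emb2]
    omega

lemma glue_bijective (h : m ≤ n) :
    Function.Bijective (fun p : Idx m × Idx (n - m) => glue n m p.1 p.2) := by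
  constructor
  · rintro ⟨a, b⟩ ⟨a', b'⟩ hab
    have hab' : glue n m a b = glue n m a' b' := hab
    simp only [Prod.mk.injEq]
    constructor
    · funext x
      have := congrFun hab' (Fin.castLE h x)
      rwa [glue_castLE, glue_castLE] at this
    · funext x
      have := congrFun hab' (emb2 n m h x)
      rwa [glue_emb2, glue_emb2] at this
  · intro w
    exact ⟨(fun x => w (Fin.castLE h x), fun x => w (emb2 n m h x)), glue_split h w⟩

lemma sum_reindex (h : m ≤ n) (F : Idx n → ℂ) :
    ∑ u : Idx n, F u = ∑ a : Idx m, ∑ b : Idx (n - m), F (glue n m a b) := by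
  rw [← Fintype.sum_bijective _ (glue_bijective h)
    (fun p : Idx m × Idx (n - m) => F (glue n m p.1 p.2)) F (fun p => rfl)]
  rw [Fintype.sum_prod_type]

lemma sum_bij_ltge (h : m ≤ n) :
    Function.Bijective (Sum.elim (Fin.castLE h) (emb2 n m h) : Fin m ⊕ Fin (n - m) → Fin n) := by
  constructor
  · rintro (x | x) (y | y) hxy
    · simp only [Sum.elim_inl] at hxy
      have := congrArg Fin.val hxy
      simp only [Fin.coe_castLE] at this
      exact congrArg Sum.inl (Fin.ext this)
    · simp only [Sum.elim_inl, Sum.elim_inr] at hxy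
      have := congrArg Fin.val hxy
      simp only [Fin.coe_castLE, emb2] at this
      have := x.isLt
      omega
    · simp only [Sum.elim_inl, Sum.elim_inr] at hxy
      have := congrArg Fin.val hxy
      simp only [Fin.coe_castLE, emb2] at this
      have := y.isLt
      omega
    · simp only [Sum.elim_inr] at hxy
      have := congrArg Fin.val hxy
      simp only [emb2] at this
      exact congrArg Sum.inr (Fin.ext (by omega))
  · intro t
    by_cases ht : (t : ℕ) < m
    · exact ⟨Sum.inl ⟨t, ht⟩, Fin.ext rfl⟩
    · exact ⟨Sum.inr ⟨(t : ℕ) - m, by have := t.isLt; omega⟩,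
        Fin.ext (by simp [emb2]; omega)⟩

lemma sum_glue (h : m ≤ n) (a : Idx m) (b : Idx (n - m)) :
    ∑ t, ((glue n m a b) t : ℕ) = (∑ x, (a x : ℕ)) + (∑ x, (b x : ℕ)) := by
  rw [← Fintype.sum_bijective _ (sum_bij_ltge h)
    (fun x : Fin m ⊕ Fin (n - m) =>
      ((glue n m a b) (Sum.elim (Fin.castLE h) (emb2 n m h) x) : ℕ))
    (fun t => ((glue n m a b) t : ℕ)) (fun x => rfl)]
  rw [Fintype.sum_sum_type]
  congr 1
  · apply Finset.sum_congr rfl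
    intro x _
    simp only [Sum.elim_inl]
    rw [glue_castLE]
  · apply Finset.sum_congr rfl
    intro x _
    simp only [Sum.elim_inr]
    rw [glue_emb2]

lemma mem_l1 (h : m ≤ n) (t : Fin n) :
    t ∈ (List.finRange m).map (Fin.castLE h) ↔ (t : ℕ) < m := by
  simp only [List.mem_map, List.mem_finRange, true_and]
  constructor
  · rintro ⟨x, rfl⟩
    exact x.isLt
  · intro ht
    exact ⟨⟨t, ht⟩, Fin.ext rfl⟩

lemma mem_l2 (h : m ≤ n) (t : Fin n) :
    t ∈ (List.finRange (n - m)).map (emb2 n m h) ↔ m ≤ (t : ℕ) := by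
  simp only [List.mem_map, List.mem_finRange, true_and]
  constructor
  · rintro ⟨x, rfl⟩
    simp [emb2]
  · intro ht
    exact ⟨⟨(t : ℕ) - m, by have := t.isLt; omega⟩, Fin.ext (by simp [emb2]; omega)⟩

lemma pair_l1 (h : m ≤ n) : ((List.finRange m).map (Fin.castLE h)).Pairwise (· < ·) :=
  (List.pairwise_lt_finRange m).map _ (fun a b hab => by
    rw [Fin.lt_def] at *
    simpa using hab)

lemma pair_l2 (h : m ≤ n) : ((List.finRange (n - m)).map (emb2 n m h)).Pairwise (· < ·) :=
  (List.pairwise_lt_finRange (n - m)).map _ (fun a b hab => by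
    rw [Fin.lt_def] at *
    simp only [emb2]
    omega)

lemma cond_l1 (h : m ≤ n) (a : Idx m) (b : Idx (n - m)) :
    (∀ s ∈ (List.finRange m).map (Fin.castLE h), glue n m a b s = 0) ↔ a = 0 := by
  constructor
  · intro H
    funext x
    have := H (Fin.castLE h x) ((mem_l1 h _).mpr (by simpa using x.isLt))
    rwa [glue_castLE] at this
  · rintro rfl s hs
    rw [glue_of_lt _ _ _ ((mem_l1 h s).mp hs)]
    rfl

lemma cond_l2 (h : m ≤ n) (a : Idx m) (b : Idx (n - m)) :
    (∀ s ∈ (List.finRange (n - m)).map (emb2 n m h), glue n m a b s = 0) ↔ b = 0 := by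
  constructor
  · intro H
    funext x
    have := H (emb2 n m h x) ((mem_l2 h _).mpr (by simp [emb2]))
    rwa [glue_emb2] at this
  · rintro rfl s hs
    rw [glue_of_ge _ _ _ (by have := (mem_l2 h s).mp hs; omega)]
    rfl

lemma setOn_l1 (h : m ≤ n) (K c : Idx m) (d b : Idx (n - m)) (a : Idx m) :
    setOn ((List.finRange m).map (Fin.castLE h)) (glue n m K d) (glue n m a b)
      = glue n m K b := by
  funext t
  by_cases ht : (t : ℕ) < m
  · rw [setOn, if_pos ((mem_l1 h t).mpr ht), glue_of_lt _ _ _ ht, glue_of_lt _ _ _ ht]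
  · rw [setOn, if_neg (fun hmem => ht ((mem_l1 h t).mp hmem)),
      glue_of_ge _ _ _ ht, glue_of_ge _ _ _ ht]

lemma setOn_l2 (h : m ≤ n) (K c : Idx (n - m)) (d : Idx m) (b : Idx (n - m)) (a : Idx m) :
    setOn ((List.finRange (n - m)).map (emb2 n m h)) (glue n m d K) (glue n m a b)
      = glue n m a K := by
  funext t
  by_cases ht : (t : ℕ) < m
  · rw [setOn, if_neg (fun hmem => by have := (mem_l2 h t).mp hmem; omega),
      glue_of_lt _ _ _ ht, glue_of_lt _ _ _ ht]
  · rw [setOn, if_pos ((mem_l2 h t).mpr (by omega)),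
      glue_of_ge _ _ _ ht, glue_of_ge _ _ _ ht]

lemma edSum_l1 (h : m ≤ n) (g : Idx n) (b : Idx (n - m)) :
    edSum ((List.finRange m).map (Fin.castLE h)) g (glue n m 0 b) = 0 := by
  apply List.sum_eq_zero
  intro x hx
  rw [List.mem_map] at hx
  obtain ⟨s, hs, rfl⟩ := hx
  have hsm : (s : ℕ) < m := (mem_l1 h s).mp hs
  have hz : sgn (glue n m 0 b) s = 0 := by
    apply Finset.sum_eq_zero
    intro t ht
    rw [Finset.mem_filter] at ht
    have htm : (t : ℕ) < m := by
      have := ht.2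
      rw [Fin.lt_def] at this
      omega
    rw [glue_of_lt _ _ _ htm]
    rfl
  rw [hz, mul_zero]

lemma sgn_glue_l2 (h : m ≤ n) (a : Idx m) (s : Fin n) (hs : m ≤ (s : ℕ)) :
    sgn (glue n m a 0) s = ∑ x, (a x : ℕ) := by
  rw [sgn, Finset.sum_subset (Finset.subset_univ _) (fun t _ htf => by
    rw [Finset.mem_filter] at htf
    push_neg at htf
    have hts : s ≤ t := htf (Finset.mem_univ t)
    rw [Fin.le_def] at hts
    rw [glue_of_ge _ _ _ (by omega)]
    rfl)]
  rw [sum_glue h]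
  simp

lemma edSum_l2 (h : m ≤ n) (c : Idx m) (K : Idx (n - m)) (a : Idx m) :
    edSum ((List.finRange (n - m)).map (emb2 n m h)) (glue n m c K) (glue n m a 0)
      = (∑ x, (K x : ℕ)) * (∑ x, (a x : ℕ)) := by
  rw [edSum, List.map_map]
  rw [List.map_congr_left (l := List.finRange (n - m))
    (g := fun x => (K x : ℕ) * (∑ y, (a y : ℕ))) (fun x _ => by
      simp only [Function.comp]
      rw [glue_emb2, sgn_glue_l2 h a _ (by simp [emb2])])]
  rw [← Fin.sum_univ_def, ← Finset.sum_mul]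

lemma modeRDM_first (h : m ≤ n) (ψ : Idx n → ℂ) :
    modeRDM n m (Fin.castLE h) ψ =
      Matrix.of (fun (a : Idx m) (b : Idx (n - m)) => ψ (glue n m a b)) *
        (Matrix.of (fun (a : Idx m) (b : Idx (n - m)) => ψ (glue n m a b)))ᴴ := by
  apply Matrix.ext
  intro J K
  rw [Matrix.mul_apply]
  show modeRDM n m (Fin.castLE h) ψ J K = _
  rw [rdm_entry m (Fin.castLE h) ψ J K (glue n m K 0) (glue n m J 0)
    (fun s => glue_castLE h K 0 s) (fun s => glue_castLE h J 0 s) (pair_l1 h)]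
  rw [sum_reindex h]
  rw [Finset.sum_comm]
  apply Finset.sum_congr rfl
  intro b _
  have key : ∀ a : Idx m,
      (if (∀ s ∈ (List.finRange m).map (Fin.castLE h), (glue n m a b) s = 0)
        then (-1:ℂ)^(edSum ((List.finRange m).map (Fin.castLE h)) (glue n m K 0) (glue n m a b)
            + edSum ((List.finRange m).map (Fin.castLE h)) (glue n m J 0) (glue n m a b))
          * (star (ψ (setOn ((List.finRange m).map (Fin.castLE h)) (glue n m K 0) (glue n m a b)))
             * ψ (setOn ((List.finRange m).map (Fin.castLE h)) (glue n m J 0) (glue n m a b)))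
        else 0)
      = (if a = 0 then star (ψ (glue n m K b)) * ψ (glue n m J b) else 0) := by
    intro a
    by_cases ha : a = 0
    · subst ha
      rw [if_pos ((cond_l1 h 0 b).mpr rfl), if_pos rfl, edSum_l1 h _ b, edSum_l1 h _ b,
        setOn_l1 h K 0 0 b 0, setOn_l1 h J 0 0 b 0]
      norm_num
    · rw [if_neg (fun hcond => ha ((cond_l1 h a b).mp hcond)), if_neg ha]
  rw [Finset.sum_congr rfl (fun a _ => key a), Finset.sum_ite_eq' Finset.univ,
    if_pos (Finset.mem_univ _)]
  rw [Matrix.of_apply, Matrix.conjTranspose_apply, Matrix.of_apply]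
  ring

lemma modeRDM_second (h : m ≤ n) (ψ : Idx n → ℂ) (hpssr : PSSR ψ) :
    modeRDM n (n - m) (emb2 n m h) ψ =
      ((Matrix.of (fun (a : Idx m) (b : Idx (n - m)) => ψ (glue n m a b)))ᴴ *
        Matrix.of (fun (a : Idx m) (b : Idx (n - m)) => ψ (glue n m a b)))ᵀ := by
  apply Matrix.ext
  intro J K
  rw [Matrix.transpose_apply, Matrix.mul_apply]
  show modeRDM n (n - m) (emb2 n m h) ψ J K = _
  rw [rdm_entry (n - m) (emb2 n m h) ψ J K (glue n m 0 K) (glue n m 0 J)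
    (fun s => glue_emb2 h 0 K s) (fun s => glue_emb2 h 0 J s) (pair_l2 h)]
  rw [sum_reindex h]
  apply Finset.sum_congr rfl
  intro a _
  have key : ∀ b : Idx (n - m),
      (if (∀ s ∈ (List.finRange (n - m)).map (emb2 n m h), (glue n m a b) s = 0)
        then (-1:ℂ)^(edSum ((List.finRange (n - m)).map (emb2 n m h)) (glue n m 0 K) (glue n m a b)
            + edSum ((List.finRange (n - m)).map (emb2 n m h)) (glue n m 0 J) (glue n m a b))
          * (star (ψ (setOn ((List.finRange (n - m)).map (emb2 n m h)) (glue n m 0 K) (glue n m a b)))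
             * ψ (setOn ((List.finRange (n - m)).map (emb2 n m h)) (glue n m 0 J) (glue n m a b)))
        else 0)
      = (if b = 0 then star (ψ (glue n m a K)) * ψ (glue n m a J) else 0) := by
    intro b
    by_cases hb : b = 0
    · subst hb
      rw [if_pos ((cond_l2 h a 0).mpr rfl), if_pos rfl,
        setOn_l2 h K 0 0 0 a, setOn_l2 h J 0 0 0 a, edSum_l2 h 0 K a, edSum_l2 h 0 J a]
      by_cases hJ0 : ψ (glue n m a J) = 0
      · simp [hJ0]
      by_cases hK0 : ψ (glue n m a K) = 0
      · simp [hK0]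
      have heven : Even ((∑ x, (K x : ℕ)) * (∑ x, (a x : ℕ))
          + (∑ x, (J x : ℕ)) * (∑ x, (a x : ℕ))) := by
        have hKJ : Even ((∑ x, (K x : ℕ)) + (∑ x, (J x : ℕ))) := by
          rcases hpssr with hE | hO
          · have h1 := hE _ hJ0
            have h2 := hE _ hK0
            rw [sum_glue h] at h1 h2
            rw [Nat.even_iff] at *
            omega
          · have h1 := hO _ hJ0
            have h2 := hO _ hK0
            rw [sum_glue h] at h1 h2
            rw [Nat.even_iff]
            rw [Nat.odd_iff] at h1 h2
            omega
        have := hKJ.mul_right (∑ x, (a x : ℕ))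
        rwa [add_mul] at this
      rw [heven.neg_one_pow, one_mul]
    · rw [if_neg (fun hcond => hb ((cond_l2 h a b).mp hcond)), if_neg hb]
  rw [Finset.sum_congr rfl (fun b _ => key b), Finset.sum_ite_eq' Finset.univ,
    if_pos (Finset.mem_univ _)]
  rw [Matrix.of_apply, Matrix.conjTranspose_apply, Matrix.of_apply]

end JW

/-- (Theorem 1 of the paper.) If a unit vector `ψ ∈ ℂ^{2^n}` satisfies the
parity superselection rule, then the mode-reduced density matrices `Λ₁` (first `m` modes)
and `Λ₂` (last `n − m` modes) have the same nonzero spectrum with multiplicities: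
`X^{2^m} · charpoly(Λ₂) = X^{2^{n−m}} · charpoly(Λ₁)`. -/
theorem pssr_implies_equispectral_mode_reductions (n m : ℕ) (hm : 1 ≤ m) (hmn : m < n)
    (ψ : Idx n → ℂ) (hψ : star ψ ⬝ᵥ ψ = 1) (hpssr : PSSR ψ) :
    X ^ (2 ^ m) * (modeRDM n (n - m) (emb2 n m hmn.le) ψ).charpoly =
      X ^ (2 ^ (n - m)) * (modeRDM n m (Fin.castLE hmn.le) ψ).charpoly := by
  rw [JW.modeRDM_second hmn.le ψ hpssr, JW.modeRDM_first hmn.le ψ, my_charpoly_transpose]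
  have hmain := X_pow_charpoly_mul_comm
    (Matrix.of (fun (a : Idx m) (b : Idx (n - m)) => ψ (JW.glue n m a b)))ᴴ
    (Matrix.of (fun (a : Idx m) (b : Idx (n - m)) => ψ (JW.glue n m a b)))
  have hc1 : Fintype.card (Idx m) = 2 ^ m := by simp [Fintype.card_fun]
  have hc2 : Fintype.card (Idx (n - m)) = 2 ^ (n - m) := by simp [Fintype.card_fun]
  rw [hc1, hc2] at hmain
  exact hmain
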